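/- arXiv:1604.03617 — 5 statements merged into one kernel-verified Lean document; each statement's English description precedes it below -/
import Mathlib

section
/- Let α ∈ 𝔽_q* and let C ⊆ 𝔽_q^n be a linear code. Then C is skew (α,θ)-cyclic if and only if its dual code C^⊥ is skew (α^{−1},θ)-cyclic. -/
/-- The skew constacyclic shift `φ_{α,θ}`:
`(c_0, …, c_{n-1}) ↦ (α·θ(c_{n-1}), θ(c_0), …, θ(c_{n-2}))`. -/
def skewShift (n : ℕ) [NeZero n] {F : Type*} [Field F] (θ : F ≃+* F) (α : F)
    (c : Fin n → F) : Fin n → F :=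
  fun i => (if i = 0 then α else 1) * θ (c (i - 1))

/-- The dual code of a set of words. -/
def dualSet {n : ℕ} {F : Type*} [Field F] (C : Set (Fin n → F)) : Set (Fin n → F) :=
  {v | ∀ c ∈ C, ∑ i, v i * c i = 0}

/-- Inverse shift with factor β on the wrap-around position. -/
def psiShift (n : ℕ) [NeZero n] {F : Type*} [Field F] (θ : F ≃+* F) (β : F)
    (c : Fin n → F) : Fin n → F :=
  fun j => θ.symm ((if j + 1 = 0 then β else 1) * c (j + 1))

lemma psi_skew {n : ℕ} [NeZero n] {F : Type*} [Field F] (θ : F ≃+* F) (α : F)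
    (hα : α ≠ 0) (c : Fin n → F) :
    psiShift n θ α⁻¹ (skewShift n θ α c) = c := by
  funext j
  simp only [psiShift, skewShift, add_sub_cancel_right]
  rcases eq_or_ne (j + 1) 0 with h | h <;>
    simp [h, inv_mul_cancel₀ hα, ← mul_assoc]

lemma skew_psi {n : ℕ} [NeZero n] {F : Type*} [Field F] (θ : F ≃+* F) (α : F)
    (hα : α ≠ 0) (c : Fin n → F) :
    skewShift n θ α (psiShift n θ α⁻¹ c) = c := by
  funext i
  simp only [skewShift, psiShift, sub_add_cancel, RingEquiv.apply_symm_apply]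
  rcases eq_or_ne i 0 with h | h <;>
    simp [h, mul_inv_cancel₀ hα, ← mul_assoc]

/-- Key identity relating the pairing with a shifted word to the pairing with
the inverse-shifted word. -/
lemma sum_shift {n : ℕ} [NeZero n] {F : Type*} [Field F] (θ : F ≃+* F) (β : F)
    (v c : Fin n → F) :
    ∑ i, skewShift n θ β v i * c i = θ (∑ j, v j * psiShift n θ β c j) := by
  rw [map_sum]
  refine (Fintype.sum_equiv (Equiv.addRight (1 : Fin n))
    (fun j => θ (v j * psiShift n θ β c j)) (fun i => skewShift n θ β v i * c i)
    fun j => ?_).symm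
  simp only [skewShift, psiShift, Equiv.coe_addRight, add_sub_cancel_right, map_mul,
    RingEquiv.apply_symm_apply]
  split_ifs <;> simp_all <;> ring

/-- Forward direction, stated for an arbitrary nonzero constant. -/
lemma fwd {n : ℕ} [NeZero n] {F : Type*} [Field F] [Fintype F]
    (θ : F ≃+* F) (α : F) (hα : α ≠ 0)
    (C : Submodule F (Fin n → F))
    (h : ∀ c ∈ C, skewShift n θ α c ∈ C) :
    ∀ v ∈ dualSet (C : Set (Fin n → F)),
      skewShift n θ α⁻¹ v ∈ dualSet (C : Set (Fin n → F)) := by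
  have hinj : Function.Injective (skewShift n θ α) :=
    Function.LeftInverse.injective (psi_skew θ α hα)
  have hfin : (C : Set (Fin n → F)).Finite := Set.toFinite _
  have hbij := (hfin.injOn_iff_bijOn_of_mapsTo (f := skewShift n θ α) h).mp
    (hinj.injOn)
  have hpsi : ∀ c ∈ C, psiShift n θ α⁻¹ c ∈ C := by
    intro c hc
    obtain ⟨c', hc', hcc⟩ := hbij.surjOn hc
    rw [← hcc, psi_skew θ α hα]
    exact hc'
  intro v hv c hc
  rw [sum_shift]
  rw [hv _ (hpsi c hc)]
  exact map_zero θ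

open LinearMap in
/-- The standard dot-product bilinear form. -/
noncomputable def dotForm (n : ℕ) (F : Type*) [Field F] :
    LinearMap.BilinForm F (Fin n → F) :=
  LinearMap.mk₂ F (fun v w => ∑ i, v i * w i)
    (fun v v' w => by simp [add_mul, Finset.sum_add_distrib])
    (fun a v w => by simp [Finset.mul_sum, mul_assoc])
    (fun v w w' => by simp [mul_add, Finset.sum_add_distrib])
    (fun a v w => by simp only [Pi.smul_apply, smul_eq_mul, Finset.mul_sum]; exact Finset.sum_congr rfl fun i _ => by ring)

lemma dotForm_apply {n : ℕ} {F : Type*} [Field F] (v w : Fin n → F) :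
    dotForm n F v w = ∑ i, v i * w i := rfl

lemma dotForm_refl {n : ℕ} {F : Type*} [Field F] : (dotForm n F).IsRefl := by
  intro v w h
  rw [dotForm_apply] at h ⊢
  rw [← h]
  exact Finset.sum_congr rfl fun i _ => mul_comm _ _

lemma dotForm_nondeg {n : ℕ} {F : Type*} [Field F] : (dotForm n F).Nondegenerate := by
  refine (LinearMap.IsRefl.nondegenerate_iff_separatingLeft (B := dotForm n F) dotForm_refl).mpr ?_
  intro v h
  funext i
  have := h (Pi.single i 1)
  rw [dotForm_apply] at this
  simpa [Pi.single_apply, Finset.sum_ite_eq'] using this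

lemma dualSet_eq_orthogonal {n : ℕ} {F : Type*} [Field F]
    (N : Submodule F (Fin n → F)) :
    dualSet (N : Set (Fin n → F)) = ((dotForm n F).orthogonal N : Set (Fin n → F)) := by
  ext v
  constructor
  · intro hv c hc
    have := hv c hc
    simp only [LinearMap.BilinForm.isOrtho_def, dotForm_apply]
    rw [← this]
    exact Finset.sum_congr rfl fun i _ => mul_comm _ _
  · intro hv c hc
    have := hv c hc
    simp only [LinearMap.BilinForm.isOrtho_def, dotForm_apply] at this
    rw [← this]
    exact Finset.sum_congr rfl fun i _ => mul_comm _ _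

/-- a linear code `C` is skew `(α,θ)`-cyclic iff its dual code
`C^⊥` is skew `(α⁻¹,θ)`-cyclic. -/
theorem stmt_3 {n : ℕ} [NeZero n] {F : Type*} [Field F] [Fintype F]
    (θ : F ≃+* F) (α : F) (hα : α ≠ 0)
    (C : Submodule F (Fin n → F)) :
    (∀ c ∈ C, skewShift n θ α c ∈ C) ↔
      (∀ v ∈ dualSet (C : Set (Fin n → F)),
        skewShift n θ α⁻¹ v ∈ dualSet (C : Set (Fin n → F))) := by
  constructor
  · exact fwd θ α hα C
  · intro h
    set D := (dotForm n F).orthogonal C with hD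
    have hDset : dualSet (C : Set (Fin n → F)) = (D : Set (Fin n → F)) :=
      dualSet_eq_orthogonal C
    have hD' : ∀ v ∈ D, skewShift n θ α⁻¹ v ∈ D := by
      intro v hv
      have := h v (by rw [hDset]; exact hv)
      rwa [hDset] at this
    have := fwd θ α⁻¹ (inv_ne_zero hα) D hD'
    rw [inv_inv] at this
    have hDD : dualSet (D : Set (Fin n → F)) = (C : Set (Fin n → F)) := by
      rw [dualSet_eq_orthogonal D, hD,
        (dotForm n F).orthogonal_orthogonal dotForm_nondeg dotForm_refl]
    rw [hDD] at this
    exact this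
end

section
/- Let n ≥ 1, 1 ≤ k ≤ n−1, and α ∈ 𝔽_q*. Let g_0, ..., g_{n−k} ∈ 𝔽_q with g_{n−k} = 1, suppose g(x) = ∑_{i=0}^{n−k} g_i x^i is a right divisor of x^n − α in 𝔽_q[x;θ], and let C ⊆ 𝔽_q^n be the code generated by g(x). Suppose ℏ_0, ..., ℏ_k ∈ 𝔽_q satisfy, for all 0 ≤ j ≤ n: ∑_i g_i·θ^i(ℏ_{j−i}) equals 1 if j = n, equals −θ^{−k}(α) if j = 0, and equals 0 otherwise (i.e., x^n − θ^{−k}(α) = g(x)·ℏ(x) in 𝔽_q[x;θ]). Then ℏ_0 ≠ 0 and the dual code C^⊥ is the code of length n generated by h(x) = ∑_{i=0}^{k} h_i x^i, where h_i := θ^k(ℏ_0^{−1})·θ^i(ℏ_{k−i}); that is, C^⊥ is the 𝔽_q-span of the vectors w_0, ..., w_{n−k−1} ∈ 𝔽_q^n, where w_j has entry θ^j(h_i) in position i+j for 0 ≤ i ≤ k and 0 in all other positions. -/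
/-- `genVec n θ a j` is the coefficient vector of `x^j · a(x)` in `𝔽_q[x;θ]`:
it has entry `θ^j(a_i)` in position `i + j` and `0` in positions `< j`. -/
def genVec (n : ℕ) {F : Type*} [Field F] (θ : F ≃+* F) (a : ℕ → F) (j : ℕ) :
    Fin n → F :=
  fun idx => if j ≤ idx.val then (⇑θ)^[j] (a (idx.val - j)) else 0

section Aux

variable {F : Type*} [Field F]

private lemma thit_zero (θ : F ≃+* F) (m : ℕ) : (⇑θ)^[m] (0 : F) = 0 :=
  Function.iterate_fixed (map_zero θ) m

private lemma thit_mul (θ : F ≃+* F) (m : ℕ) (a b : F) :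
    (⇑θ)^[m] (a * b) = (⇑θ)^[m] a * (⇑θ)^[m] b := by
  induction m generalizing a b with
  | zero => rfl
  | succ m ih => simp only [Function.iterate_succ_apply, map_mul, ih]

private lemma thit_sum (θ : F ≃+* F) (m : ℕ) {ι : Type*} (s : Finset ι) (f : ι → F) :
    (⇑θ)^[m] (∑ x ∈ s, f x) = ∑ x ∈ s, (⇑θ)^[m] (f x) := by
  induction m generalizing f with
  | zero => rfl
  | succ m ih =>
      simp only [Function.iterate_succ_apply, map_sum]
      exact ih _

private lemma thit_ne_zero (θ : F ≃+* F) (m : ℕ) {a : F} (ha : a ≠ 0) :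
    (⇑θ)^[m] a ≠ 0 := by
  intro h
  exact ha (θ.injective.iterate m (h.trans (thit_zero θ m).symm))

private def dotL {n : ℕ} (v : Fin n → F) : (Fin n → F) →ₗ[F] F where
  toFun c := ∑ i, v i * c i
  map_add' a b := by simp [mul_add, Finset.sum_add_distrib]
  map_smul' r a := by simp [Finset.mul_sum, mul_left_comm]

private lemma finrank_span_triangular {n m : ℕ} (hm : m ≤ n) (u : ℕ → Fin n → F)
    (hzero : ∀ j < m, ∀ p : Fin n, (p : ℕ) < j → u j p = 0)
    (hdiag : ∀ j, ∀ hj : j < m, u j ⟨j, lt_of_lt_of_le hj hm⟩ ≠ 0) :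
    Module.finrank F (Submodule.span F {v : Fin n → F | ∃ j < m, v = u j}) = m := by
  have hindep : LinearIndependent F (fun j : Fin m => u j) := by
    rw [linearIndependent_iff']
    intro s g hsum
    suffices h : ∀ N, ∀ i ∈ s, (i : ℕ) < N → g i = 0 by
      intro i hi; exact h m i hi i.isLt
    intro N
    induction N with
    | zero => intro i _ h; exact absurd h (Nat.not_lt_zero _)
    | succ N ih =>
      intro i hi hiN
      rcases Nat.lt_or_ge (i : ℕ) N with hlt | hge
      · exact ih i hi hlt
      have hiN' : (i : ℕ) = N := le_antisymm (Nat.lt_succ_iff.mp hiN) hge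
      have h0 := congrFun hsum ⟨i, lt_of_lt_of_le i.isLt hm⟩
      simp only [Finset.sum_apply, Pi.smul_apply, smul_eq_mul, Pi.zero_apply] at h0
      rw [Finset.sum_eq_single i] at h0
      · rcases mul_eq_zero.mp h0 with h | h
        · exact h
        · exact absurd h (hdiag i i.isLt)
      · intro j hj hji
        rcases Nat.lt_or_ge (j : ℕ) (i : ℕ) with hlt | hge'
        · rw [ih j hj (by omega), zero_mul]
        · have hlt2 : ((⟨i, lt_of_lt_of_le i.isLt hm⟩ : Fin n) : ℕ) < (j : ℕ) := by
            have : (j : ℕ) ≠ (i : ℕ) := fun hh => hji (Fin.ext hh)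
            simpa using lt_of_le_of_ne hge' (Ne.symm this)
          rw [hzero j j.isLt _ hlt2, mul_zero]
      · intro h; exact absurd hi h
  have hset : {v : Fin n → F | ∃ j < m, v = u j} = Set.range (fun j : Fin m => u j) := by
    ext v
    constructor
    · rintro ⟨j, hj, rfl⟩; exact ⟨⟨j, hj⟩, rfl⟩
    · rintro ⟨j, rfl⟩; exact ⟨j, j.isLt, rfl⟩
  rw [hset, finrank_span_eq_card hindep, Fintype.card_fin]

private lemma dual_dim {n : ℕ} (V : Submodule F (Fin n → F)) :
    ∃ D : Submodule F (Fin n → F),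
      (D : Set (Fin n → F)) = dualSet (V : Set (Fin n → F)) ∧
        Module.finrank F D + Module.finrank F V = n := by
  classical
  let b := Pi.basisFun F (Fin n)
  let Φ : (Fin n → F) ≃ₗ[F] Module.Dual F (Fin n → F) := b.toDualEquiv
  have hΦ : ∀ v c : Fin n → F, Φ v c = ∑ i, v i * c i := by
    intro v c
    conv_lhs => rw [← b.sum_repr c]
    rw [Module.Basis.toDualEquiv_apply, map_sum]
    refine Finset.sum_congr rfl fun i _ => ?_
    rw [map_smul, Module.Basis.toDual_eq_repr]
    simp [b, Pi.basisFun_repr, mul_comm]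
  refine ⟨V.dualAnnihilator.comap (Φ : (Fin n → F) →ₗ[F] Module.Dual F (Fin n → F)), ?_, ?_⟩
  · ext v
    simp only [SetLike.mem_coe, Submodule.mem_comap, Submodule.mem_dualAnnihilator, dualSet,
      Set.mem_setOf_eq, LinearEquiv.coe_coe, hΦ]
  · have h1 : Module.finrank F (V.dualAnnihilator.comap
        (Φ : (Fin n → F) →ₗ[F] Module.Dual F (Fin n → F)))
        = Module.finrank F V.dualAnnihilator := by
      rw [Submodule.comap_equiv_eq_map_symm]
      exact LinearEquiv.finrank_map_eq _ _
    have h2 : Module.finrank F V.dualAnnihilator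
        = Module.finrank F ((Fin n → F) ⧸ V) :=
      (LinearEquiv.finrank_eq (Subspace.quotEquivAnnihilator V)).symm
    have h3 := Submodule.finrank_quotient_add_finrank V
    have h4 : Module.finrank F (Fin n → F) = n := Module.finrank_fin_fun F
    rw [h1, h2]
    omega

end Aux

/-- if `g(x) = ∑_{i=0}^{n-k} g_i x^i` (monic) right-divides `x^n - α`
in `𝔽_q[x;θ]`, `C` is the code generated by `g(x)`, and
`x^n - θ^{-k}(α) = g(x)·ℏ(x)`, then `ℏ_0 ≠ 0` and the dual code `C^⊥` is the
code of length `n` generated by `h(x) = ∑_{i=0}^k θ^k(ℏ_0⁻¹)·θ^i(ℏ_{k-i}) x^i`. -/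
theorem stmt_5 {F : Type*} [Field F] [Fintype F]
    (θ : F ≃+* F) (n k : ℕ) (hk : 1 ≤ k) (hkn : k ≤ n - 1)
    (α : F) (hα : α ≠ 0)
    (g ℏ : ℕ → F)
    (hgtop : ∀ i, n - k < i → g i = 0) (hgmonic : g (n - k) = 1)
    (hdvd : ∃ t : ℕ → F, (∀ i, k < i → t i = 0) ∧
      ∀ j ≤ n, ∑ i ∈ Finset.range (j + 1), t i * (⇑θ)^[i] (g (j - i)) =
        if j = n then 1 else if j = 0 then -α else 0)
    (hℏtop : ∀ i, k < i → ℏ i = 0)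
    (hℏ : ∀ j ≤ n, ∑ i ∈ Finset.range (j + 1), g i * (⇑θ)^[i] (ℏ (j - i)) =
      if j = n then 1 else if j = 0 then -(⇑θ.symm)^[k] α else 0) :
    ℏ 0 ≠ 0 ∧
    dualSet ((Submodule.span F
        {v : Fin n → F | ∃ j < k, v = genVec n θ g j} : Submodule F (Fin n → F)) :
          Set (Fin n → F)) =
      ((Submodule.span F {w : Fin n → F | ∃ j < n - k,
          w = genVec n θ
            (fun i => if i ≤ k then (⇑θ)^[k] (ℏ 0)⁻¹ * (⇑θ)^[i] (ℏ (k - i)) else 0) j} :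
        Submodule F (Fin n → F)) : Set (Fin n → F)) := by
  classical
  have hn : k + 1 ≤ n := by omega
  -- the constant coefficient relation
  have hg0ℏ0 : g 0 * ℏ 0 = -(⇑θ.symm)^[k] α := by
    have h0 := hℏ 0 (Nat.zero_le n)
    rw [if_neg (by omega), if_pos rfl, Finset.sum_range_one] at h0
    simpa using h0
  have hα' : -(⇑θ.symm)^[k] α ≠ 0 := by
    simp only [ne_eq, neg_eq_zero]
    exact thit_ne_zero θ.symm k hα
  have hℏ0 : ℏ 0 ≠ 0 := fun h => hα' (by rw [← hg0ℏ0, h, mul_zero])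
  have hg0 : g 0 ≠ 0 := fun h => hα' (by rw [← hg0ℏ0, h, zero_mul])
  refine ⟨hℏ0, ?_⟩
  -- leading coefficient of ℏ
  have hℏk1 : (⇑θ)^[n - k] (ℏ k) = 1 := by
    have hn' := hℏ n le_rfl
    rw [if_pos rfl] at hn'
    rw [Finset.sum_eq_single (n - k)] at hn'
    · rw [hgmonic, one_mul, show n - (n - k) = k by omega] at hn'
      exact hn'
    · intro i hi hne
      have hi' : i < n + 1 := Finset.mem_range.mp hi
      rcases Nat.lt_or_ge i (n - k) with h | h
      · rw [hℏtop (n - i) (by omega), thit_zero, mul_zero]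
      · rw [hgtop i (by omega), zero_mul]
    · intro h; exact absurd (Finset.mem_range.mpr (by omega)) h
  have hℏk : ℏ k ≠ 0 := by
    intro h; rw [h, thit_zero] at hℏk1; exact zero_ne_one hℏk1
  set h : ℕ → F := fun i => if i ≤ k then (⇑θ)^[k] (ℏ 0)⁻¹ * (⇑θ)^[i] (ℏ (k - i)) else 0
    with hh
  have hh0 : h 0 = (⇑θ)^[k] (ℏ 0)⁻¹ * ℏ k := by
    rw [hh]; simp
  have hh0ne : h 0 ≠ 0 := by
    rw [hh0]
    exact mul_ne_zero (thit_ne_zero θ k (inv_ne_zero hℏ0)) hℏk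
  -- orthogonality of generators
  have ortho : ∀ j, j < n - k → ∀ i, i < k →
      ∑ p : Fin n, genVec n θ h j p * genVec n θ g i p = 0 := by
    intro j hj i hi
    set J := k + j - i with hJdef
    have hik : i ≤ k := le_of_lt hi
    have hJi : J + i = k + j := by omega
    have hJn' : k + j + 1 ≤ n := by omega
    have hS : ∑ u ∈ Finset.range (J + 1), g u * (⇑θ)^[u] (ℏ (J - u)) = 0 := by
      have hS0 := hℏ J (by omega)
      rwa [if_neg (by omega), if_neg (by omega)] at hS0
    set T : ℕ → F := fun p =>
      (if j ≤ p then (⇑θ)^[j] (h (p - j)) else 0) *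
      (if i ≤ p then (⇑θ)^[i] (g (p - i)) else 0) with hT
    have step1 : ∑ p : Fin n, genVec n θ h j p * genVec n θ g i p
        = ∑ p ∈ Finset.range n, T p := by
      rw [← Fin.sum_univ_eq_sum_range T n]
      exact Finset.sum_congr rfl fun p _ => by rw [hT]; rfl
    have step2 : ∑ p ∈ Finset.range n, T p = ∑ u ∈ Finset.range (J + 1), T (u + i) := by
      rw [show (∑ u ∈ Finset.range (J + 1), T (u + i))
          = ∑ p ∈ (Finset.range (J + 1)).image (fun u => u + i), T p from
        (Finset.sum_image fun a _ b _ hab => by omega).symm]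
      refine (Finset.sum_subset ?_ ?_).symm
      · intro p hp
        simp only [Finset.mem_image, Finset.mem_range] at hp ⊢
        obtain ⟨u, hu, rfl⟩ := hp
        omega
      · intro p hp hpn
        simp only [Finset.mem_range] at hp
        simp only [Finset.mem_image, Finset.mem_range] at hpn
        have hcase : p < i ∨ k + j < p := by
          by_contra hc
          push_neg at hc
          exact hpn ⟨p - i, by omega, by omega⟩
        rw [hT]
        rcases hcase with h1 | h1
        · simp only
          rw [if_neg (show ¬ i ≤ p by omega), mul_zero]
        · simp only
          rcases Nat.lt_or_ge p j with h2 | h2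
          · rw [if_neg (show ¬ j ≤ p by omega), zero_mul]
          · rw [if_pos h2]
            have hz : h (p - j) = 0 := by rw [hh]; exact if_neg (by omega)
            rw [hz, thit_zero, zero_mul]
    have step3 : ∀ u ∈ Finset.range (J + 1),
        T (u + i) = (⇑θ)^[k + j] ((ℏ 0)⁻¹) * (⇑θ)^[i] (g u * (⇑θ)^[u] (ℏ (J - u))) := by
      intro u hu
      have hu' : u ≤ J := by
        have := Finset.mem_range.mp hu; omega
      rw [hT]
      simp only
      rw [if_pos (by omega : i ≤ u + i), show u + i - i = u by omega]
      rcases Nat.lt_or_ge (u + i) j with hc | hc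
      · rw [if_neg (by omega)]
        have hz : ℏ (J - u) = 0 := hℏtop _ (by omega)
        rw [hz, thit_zero, mul_zero, thit_zero, mul_zero, zero_mul]
      · rw [if_pos hc]
        have hm : u + i - j ≤ k := by omega
        have hhm : h (u + i - j)
            = (⇑θ)^[k] ((ℏ 0)⁻¹) * (⇑θ)^[u + i - j] (ℏ (k - (u + i - j))) := by
          rw [hh]; exact if_pos hm
        rw [hhm, thit_mul, ← Function.iterate_add_apply, ← Function.iterate_add_apply,
          show j + k = k + j by omega, show j + (u + i - j) = u + i by omega,
          show k - (u + i - j) = J - u by omega,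
          thit_mul, ← Function.iterate_add_apply, show i + u = u + i by omega]
        ring
    rw [step1, step2, Finset.sum_congr rfl step3, ← Finset.mul_sum, ← thit_sum, hS,
      thit_zero, mul_zero]
  -- dimensions
  have hVrank : Module.finrank F (Submodule.span F
      {v : Fin n → F | ∃ j < k, v = genVec n θ g j}) = k := by
    refine finrank_span_triangular (by omega) (genVec n θ g) ?_ ?_
    · intro j hj p hp
      simp [genVec, Nat.not_le.mpr hp]
    · intro j hj
      simp only [genVec]
      rw [if_pos (le_refl j), Nat.sub_self]
      exact thit_ne_zero θ j hg0
  have hWrank : Module.finrank F (Submodule.span F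
      {w : Fin n → F | ∃ j < n - k, w = genVec n θ h j}) = n - k := by
    refine finrank_span_triangular (by omega) (genVec n θ h) ?_ ?_
    · intro j hj p hp
      simp [genVec, Nat.not_le.mpr hp]
    · intro j hj
      simp only [genVec]
      rw [if_pos (le_refl j), Nat.sub_self]
      exact thit_ne_zero θ j hh0ne
  obtain ⟨D, hDset, hDrank⟩ :=
    dual_dim (Submodule.span F {v : Fin n → F | ∃ j < k, v = genVec n θ g j})
  have hle : Submodule.span F {w : Fin n → F | ∃ j < n - k, w = genVec n θ h j} ≤ D := by
    rw [Submodule.span_le]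
    rintro w ⟨j, hjlt, rfl⟩
    have hmem : genVec n θ h j ∈ dualSet
        ((Submodule.span F {v : Fin n → F | ∃ j < k, v = genVec n θ g j} :
          Submodule F (Fin n → F)) : Set (Fin n → F)) := by
      intro c hc
      have hker : Submodule.span F {v : Fin n → F | ∃ j < k, v = genVec n θ g j}
          ≤ LinearMap.ker (dotL (genVec n θ h j)) := by
        rw [Submodule.span_le]
        rintro c' ⟨i', hi', rfl⟩
        simp only [SetLike.mem_coe, LinearMap.mem_ker]
        exact ortho j hjlt i' hi'
      exact hker hc
    rw [← hDset] at hmem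
    exact hmem
  have hrankD : Module.finrank F D = n - k := by
    rw [hVrank] at hDrank; omega
  have heq : Submodule.span F {w : Fin n → F | ∃ j < n - k, w = genVec n θ h j} = D :=
    Submodule.eq_of_le_of_finrank_le hle (by rw [hrankD, hWrank])
  rw [← hDset, heq]
end

section
/- Let α ∈ 𝔽_q*, 1 ≤ k ≤ n, and let C ⊆ 𝔽_q^n be a linear code with dim C = n − k. Then C is skew (α,θ)-cyclic if and only if there exist a row vector P ∈ 𝔽_q^k and an invertible k×k matrix T over 𝔽_q such that, setting τ(v) = (θ(v_0), ..., θ(v_{k−1}))·T, one has τ^n(P) = α·P and C = {(c_0, ..., c_{n−1}) ∈ 𝔽_q^n : ∑_{i=0}^{n−1} c_i·τ^i(P) = 0}. -/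
/-- The θ-semilinear map `τ(v) = (θ(v_0), …, θ(v_{k-1}))·T` attached to a
matrix `T`. -/
def tauMap {k : ℕ} {F : Type*} [Field F] (θ : F ≃+* F)
    (T : Matrix (Fin k) (Fin k) F) : (Fin k → F) → (Fin k → F) :=
  fun v => Matrix.vecMul (fun i => θ (v i)) T

section Aux

variable {k n : ℕ} {F : Type*} [Field F] (θ : F ≃+* F) (T : Matrix (Fin k) (Fin k) F)

lemma tauMap_add (u v : Fin k → F) :
    tauMap θ T (u + v) = tauMap θ T u + tauMap θ T v := by
  unfold tauMap
  have : (fun i => θ ((u + v) i)) = (fun i => θ (u i)) + (fun i => θ (v i)) := by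
    funext i; simp [map_add]
  rw [this, Matrix.add_vecMul]

lemma tauMap_zero : tauMap θ T 0 = 0 := by
  unfold tauMap
  have : (fun i => θ ((0 : Fin k → F) i)) = (0 : Fin k → F) := by
    funext i; simp
  rw [this, Matrix.zero_vecMul]

lemma tauMap_smul (a : F) (v : Fin k → F) :
    tauMap θ T (a • v) = θ a • tauMap θ T v := by
  unfold tauMap
  have : (fun i => θ ((a • v) i)) = θ a • (fun i => θ (v i)) := by
    funext i; simp [map_mul]
  rw [this, Matrix.smul_vecMul]

lemma tauMap_sum {ι : Type*} (s : Finset ι) (g : ι → (Fin k → F)) :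
    tauMap θ T (∑ i ∈ s, g i) = ∑ i ∈ s, tauMap θ T (g i) := by
  classical
  induction s using Finset.induction with
  | empty => simp [tauMap_zero]
  | insert _ _ h ih => rw [Finset.sum_insert h, tauMap_add, ih, Finset.sum_insert h]

variable [NeZero n] (α : F)

lemma skewShift_add (u v : Fin n → F) :
    skewShift n θ α (u + v) = skewShift n θ α u + skewShift n θ α v := by
  funext i; simp [skewShift, map_add, mul_add]

lemma skewShift_sub (u v : Fin n → F) :
    skewShift n θ α (u - v) = skewShift n θ α u - skewShift n θ α v := by
  funext i; simp [skewShift, map_sub, mul_sub]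

lemma skewShift_smul (a : F) (v : Fin n → F) :
    skewShift n θ α (a • v) = θ a • skewShift n θ α v := by
  funext i
  simp only [skewShift, Pi.smul_apply, smul_eq_mul, map_mul]
  ring

lemma skewShift_injective (hα : α ≠ 0) : Function.Injective (skewShift n θ α) := by
  intro a b hab
  funext j
  have h := congrFun hab (j + 1)
  simp only [skewShift, add_sub_cancel_right] at h
  have hne : (if j + 1 = 0 then α else (1 : F)) ≠ 0 := by
    split <;> simp [hα]
  exact θ.injective (mul_left_cancel₀ hne h)

lemma skewShift_single (i : Fin n) :
    skewShift n θ α (Pi.single i (1 : F)) =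
      (if i + 1 = 0 then α else 1) • (Pi.single (i + 1) (1 : F) : Fin n → F) := by
  classical
  funext j
  simp only [skewShift, Pi.smul_apply, smul_eq_mul]
  by_cases hj : j = i + 1
  · subst hj
    simp [add_sub_cancel_right, Pi.single_apply]
  · have h1 : j - 1 ≠ i := by
      intro h; apply hj; rw [← h]; rw [sub_add_cancel]
    rw [Pi.single_apply, Pi.single_apply, if_neg h1, if_neg hj, map_zero]
    ring

lemma fin_add_one_eq_zero_iff (i : Fin n) : i + 1 = 0 ↔ (i : ℕ) = n - 1 := by
  have hn : 0 < n := Nat.pos_of_ne_zero (NeZero.ne n)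
  rw [Fin.ext_iff, Fin.val_add, Fin.val_zero, Fin.val_one']
  rcases Nat.eq_or_lt_of_le hn with h | h
  · have hi : (i : ℕ) = 0 := by have := i.isLt; omega
    rw [hi, ← h]
  · have h1 : 1 % n = 1 := Nat.mod_eq_of_lt h
    rw [h1]
    constructor
    · intro hmod
      have hi := i.isLt
      rcases Nat.lt_or_ge ((i : ℕ) + 1) n with h' | h'
      · rw [Nat.mod_eq_of_lt h'] at hmod; omega
      · omega
    · intro hi
      rw [hi]
      have h2 : n - 1 + 1 = n := by omega
      rw [h2, Nat.mod_self]

lemma fin_val_add_one (i : Fin n) (hi : (i : ℕ) ≠ n - 1) :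
    ((i + 1 : Fin n) : ℕ) = (i : ℕ) + 1 := by
  have hn : 0 < n := Nat.pos_of_ne_zero (NeZero.ne n)
  have hlt : (i : ℕ) + 1 < n := by have := i.isLt; omega
  have h1 : 1 % n = 1 := Nat.mod_eq_of_lt (by omega)
  rw [Fin.val_add, Fin.val_one', h1, Nat.mod_eq_of_lt hlt]

end Aux

/-- a linear `[n, n-k]`-code `C` is skew `(α,θ)`-cyclic iff it has
a parity check matrix of the form `[Pᵗ, (Pτ)ᵗ, …, (Pτ^{n-1})ᵗ]` with
`τ = Θ ∘ T`, `T ∈ GL(k,q)` and `Pτⁿ = α·P`. -/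
theorem stmt_6 {n k : ℕ} [NeZero n] (hk : 1 ≤ k) (hkn : k ≤ n)
    {F : Type*} [Field F] [Fintype F]
    (θ : F ≃+* F) (α : F) (hα : α ≠ 0)
    (C : Submodule F (Fin n → F)) (hdim : Module.finrank F C = n - k) :
    (∀ c ∈ C, skewShift n θ α c ∈ C) ↔
      ∃ (P : Fin k → F) (T : Matrix (Fin k) (Fin k) F), IsUnit T ∧
        (tauMap θ T)^[n] P = α • P ∧
        (C : Set (Fin n → F)) =
          {c : Fin n → F | ∑ i : Fin n, c i • (tauMap θ T)^[(i : ℕ)] P = 0} := by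
  classical
  have hn : 0 < n := Nat.pos_of_ne_zero (NeZero.ne n)
  constructor
  · -- forward direction
    intro hC
    set φ : (Fin n → F) → (Fin n → F) := skewShift n θ α with hφdef
    -- the parity check map π
    have hfr : Module.finrank F ((Fin n → F) ⧸ C) = k := by
      have h1 := Submodule.finrank_quotient_add_finrank C
      rw [hdim, Module.finrank_fin_fun] at h1
      omega
    let eqv : ((Fin n → F) ⧸ C) ≃ₗ[F] (Fin k → F) :=
      LinearEquiv.ofFinrankEq _ _ (by rw [hfr, Module.finrank_fin_fun])
    let π : (Fin n → F) →ₗ[F] (Fin k → F) := eqv.toLinearMap ∘ₗ C.mkQ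
    have hπker : ∀ x, π x = 0 ↔ x ∈ C := by
      intro x
      constructor
      · intro h
        have h2 : C.mkQ x = 0 := by
          apply eqv.injective
          rw [map_zero]
          exact h
        rwa [Submodule.mkQ_apply, Submodule.Quotient.mk_eq_zero] at h2
      · intro h
        have h2 : C.mkQ x = 0 := by
          rw [Submodule.mkQ_apply, Submodule.Quotient.mk_eq_zero]; exact h
        show eqv (C.mkQ x) = 0
        rw [h2, map_zero]
    have hπsurj : Function.Surjective π :=
      eqv.surjective.comp (Submodule.mkQ_surjective C)
    obtain ⟨s, hs⟩ := π.exists_rightInverse_of_surjective (LinearMap.range_eq_top.2 hπsurj)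
    set σ : (Fin k → F) → (Fin k → F) := fun w => π (φ (s w)) with hσdef
    have hcomm : ∀ x, σ (π x) = π (φ x) := by
      intro x
      have h1 : s (π x) - x ∈ C := by
        rw [← hπker, map_sub]
        have : π (s (π x)) = π x := by
          rw [← LinearMap.comp_apply, hs]; rfl
        rw [this, sub_self]
      have h2 : φ (s (π x) - x) ∈ C := hC _ h1
      have h3 : π (φ (s (π x))) - π (φ x) = 0 := by
        rw [← map_sub, ← skewShift_sub θ α, hπker]
        exact h2
      have := sub_eq_zero.mp h3
      simpa [hσdef] using this
    have hσadd : ∀ u v, σ (u + v) = σ u + σ v := by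
      intro u v
      simp only [hσdef, map_add]
      rw [hφdef, skewShift_add, map_add]
    have hσsmul : ∀ (a : F) u, σ (a • u) = θ a • σ u := by
      intro a u
      simp only [hσdef, map_smul]
      rw [hφdef, skewShift_smul, map_smul]
    -- the linear map L
    let Llin : (Fin k → F) →ₗ[F] (Fin k → F) :=
      { toFun := fun w => σ (fun i => θ.symm (w i))
        map_add' := by
          intro u v
          show σ (fun i => θ.symm ((u + v) i)) =
            σ (fun i => θ.symm (u i)) + σ (fun i => θ.symm (v i))
          have h9 : (fun i => θ.symm ((u + v) i)) =
              (fun i => θ.symm (u i)) + (fun i => θ.symm (v i)) := by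
            funext i; simp [map_add]
          rw [h9, hσadd]
        map_smul' := by
          intro a v
          show σ (fun i => θ.symm ((a • v) i)) = a • σ (fun i => θ.symm (v i))
          have h9 : (fun i => θ.symm ((a • v) i)) =
              θ.symm a • (fun i => θ.symm (v i)) := by
            funext i; simp [map_mul]
          rw [h9, hσsmul]
          simp }
    set T : Matrix (Fin k) (Fin k) F := (LinearMap.toMatrix' Llin).transpose with hTdef
    have hT : ∀ v, tauMap θ T v = σ v := by
      intro v
      show Matrix.vecMul (fun i => θ (v i)) (LinearMap.toMatrix' Llin).transpose = σ v
      rw [Matrix.vecMul_transpose, ← Matrix.toLin'_apply, Matrix.toLin'_toMatrix']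
      show σ (fun i => θ.symm (θ (v i))) = σ v
      simp
    -- T is a unit
    have hφinj : Function.Injective φ := skewShift_injective θ α hα
    have hφsurj : Function.Surjective φ :=
      Finite.injective_iff_surjective.mp hφinj
    have hσsurj : Function.Surjective σ := by
      intro w
      obtain ⟨x, hx⟩ := hπsurj w
      obtain ⟨y, hy⟩ := hφsurj x
      exact ⟨π y, by rw [hcomm y, hy, hx]⟩
    have hLsurj : Function.Surjective Llin := by
      intro w
      obtain ⟨u, hu⟩ := hσsurj w
      refine ⟨fun i => θ (u i), ?_⟩
      show σ (fun i => θ.symm (θ (u i))) = w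
      simpa using hu
    have hLinj : Function.Injective Llin := LinearMap.injective_iff_surjective.mpr hLsurj
    let Leq := LinearEquiv.ofBijective Llin ⟨hLinj, hLsurj⟩
    have hunit : IsUnit T := by
      rw [Matrix.isUnit_iff_isUnit_det]
      apply Matrix.isUnit_det_of_right_inverse (B := (LinearMap.toMatrix' Leq.symm.toLinearMap).transpose)
      rw [hTdef, ← Matrix.transpose_mul, ← LinearMap.toMatrix'_comp]
      have hcompid : Leq.symm.toLinearMap ∘ₗ Llin = LinearMap.id := by
        apply LinearMap.ext
        intro x
        show Leq.symm (Llin x) = x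
        have : Llin x = Leq x := rfl
        rw [this, LinearEquiv.symm_apply_apply]
      rw [hcompid, LinearMap.toMatrix'_id, Matrix.transpose_one]
    -- the vector P
    set P : Fin k → F := π (Pi.single 0 1) with hPdef
    have hiter : ∀ (m : ℕ) (h : m < n),
        (tauMap θ T)^[m] P = π (Pi.single (⟨m, h⟩ : Fin n) 1) := by
      intro m
      induction m with
      | zero =>
        intro h
        have : (⟨0, h⟩ : Fin n) = 0 := by ext; simp
        rw [this]
        simp [hPdef]
      | succ m ih =>
        intro h
        have hm : m < n := by omega
        rw [Function.iterate_succ_apply', ih hm, hT, hcomm]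
        have hne : ((⟨m, hm⟩ : Fin n) : ℕ) ≠ n - 1 := by
          simp only [Fin.val_mk]; omega
        have h1 : (⟨m, hm⟩ : Fin n) + 1 = ⟨m + 1, h⟩ := by
          apply Fin.ext
          rw [fin_val_add_one _ hne]
        have h2 : (⟨m, hm⟩ : Fin n) + 1 ≠ 0 := fun hcon =>
          hne ((fin_add_one_eq_zero_iff _).mp hcon)
        rw [hφdef, skewShift_single, if_neg h2, h1, one_smul]
    have hlast : ∀ h : n - 1 < n,
        tauMap θ T (π (Pi.single (⟨n - 1, h⟩ : Fin n) 1)) = α • P := by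
      intro h
      rw [hT, hcomm]
      have h1 : (⟨n - 1, h⟩ : Fin n) + 1 = 0 := by
        rw [fin_add_one_eq_zero_iff]
      rw [hφdef, skewShift_single, if_pos h1, h1, map_smul]
    have hταP : (tauMap θ T)^[n] P = α • P := by
      have hn1 : n - 1 < n := by omega
      have : n = (n - 1) + 1 := by omega
      rw [this, Function.iterate_succ_apply', hiter (n - 1) hn1]
      exact hlast hn1
    refine ⟨P, T, hunit, hταP, ?_⟩
    ext x
    simp only [SetLike.mem_coe, Set.mem_setOf_eq]
    rw [← hπker]
    have hsingle : ∀ i : Fin n, π (Pi.single i (1 : F)) = (tauMap θ T)^[(i : ℕ)] P := by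
      intro i
      rw [hiter (i : ℕ) i.isLt]
    have hx : π x = ∑ i : Fin n, x i • (tauMap θ T)^[(i : ℕ)] P := by
      have hxsum : x = ∑ i : Fin n, x i • (Pi.single i (1 : F) : Fin n → F) := by
        funext j
        simp [Pi.single_apply, Finset.sum_ite_eq', mul_comm]
      conv_lhs => rw [hxsum]
      rw [map_sum]
      congr 1
      funext i
      rw [map_smul, hsingle]
    rw [hx]
  · -- backward direction
    rintro ⟨P, T, hTu, hτn, hset⟩ c hc
    have hc' : ∑ i : Fin n, c i • (tauMap θ T)^[(i : ℕ)] P = 0 := by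
      have : c ∈ (C : Set (Fin n → F)) := hc
      rw [hset] at this
      exact this
    rw [← SetLike.mem_coe, hset, Set.mem_setOf_eq]
    set f : ℕ → (Fin k → F) := fun m => (tauMap θ T)^[m] P with hfdef
    -- apply τ to the defining equation
    have happ : ∑ i : Fin n, θ (c i) • f ((i : ℕ) + 1) = 0 := by
      have h1 := congrArg (tauMap θ T) hc'
      rw [tauMap_sum, tauMap_zero] at h1
      rw [← h1]
      congr 1
      funext i
      rw [tauMap_smul]
      congr 1
      simp only [hfdef]
      exact Function.iterate_succ_apply' (tauMap θ T) (i : ℕ) P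
    set Lst : Fin n := ⟨n - 1, by omega⟩ with hLstdef
    -- reindex the target sum
    have hre : ∑ j : Fin n, skewShift n θ α c j • f (j : ℕ) =
        ∑ i : Fin n, ((if i + 1 = 0 then α else 1) * θ (c i)) • f ((i + 1 : Fin n) : ℕ) := by
      rw [← Equiv.sum_comp (Equiv.addRight (1 : Fin n))
        (fun j => skewShift n θ α c j • f (j : ℕ))]
      congr 1
      funext i
      simp only [Equiv.coe_addRight, skewShift, add_sub_cancel_right]
      rfl
    rw [hre]
    have hLstmem : Lst ∈ Finset.univ := Finset.mem_univ _
    rw [Finset.sum_eq_sum_sdiff_singleton_add hLstmem]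
    rw [Finset.sum_eq_sum_sdiff_singleton_add hLstmem] at happ
    have hLst1 : Lst + 1 = 0 := by
      apply (fin_add_one_eq_zero_iff Lst).mpr
      rw [hLstdef]
    have hterm : ∀ i ∈ Finset.univ \ {Lst},
        ((if i + 1 = 0 then α else 1) * θ (c i)) • f ((i + 1 : Fin n) : ℕ) =
          θ (c i) • f ((i : ℕ) + 1) := by
      intro i hi
      have hine : i ≠ Lst := by
        simp only [Finset.mem_sdiff, Finset.mem_singleton] at hi
        exact hi.2
      have hival : (i : ℕ) ≠ n - 1 := by
        intro h
        apply hine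
        apply Fin.ext
        rw [h, hLstdef]
      have h0 : i + 1 ≠ 0 := fun hcon => hival ((fin_add_one_eq_zero_iff i).mp hcon)
      rw [if_neg h0, one_mul, fin_val_add_one i hival]
    rw [Finset.sum_congr rfl hterm]
    have hLstterm : ((if Lst + 1 = 0 then α else 1) * θ (c Lst)) • f ((Lst + 1 : Fin n) : ℕ) =
        (α * θ (c Lst)) • P := by
      rw [if_pos hLst1, hLst1]
      simp [hfdef]
    rw [hLstterm]
    have hfn : f ((Lst : ℕ) + 1) = α • P := by
      have : (Lst : ℕ) + 1 = n := by simp only [hLstdef, Fin.val_mk]; omega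
      rw [this, hfdef]
      exact hτn
    rw [hfn] at happ
    have hsw : (α * θ (c Lst)) • P = θ (c Lst) • (α • P) := by
      rw [smul_smul, mul_comm]
    rw [hsw]
    exact happ
end

section
/- Let α ∈ 𝔽_q*, 1 ≤ k ≤ n−1, and let g(x) = ∑_{i=0}^{k} a_i x^i with a_k = 1 be a right divisor of x^n − α in 𝔽_q[x;θ]. Let T_g be the k×k companion matrix of g (with entry 1 in positions (i, i+1) for 0 ≤ i ≤ k−2, last row (−a_0, −a_1, ..., −a_{k−1}), and zeros elsewhere), let τ(v) = (θ(v_0), ..., θ(v_{k−1}))·T_g, and let P = (1, 0, ..., 0) ∈ 𝔽_q^k. Then a linear code C ⊆ 𝔽_q^n is the code generated by g(x) (the 𝔽_q-span of the vectors v_0, ..., v_{n−k−1}, where v_j has entry θ^j(a_i) in position i+j and 0 elsewhere) if and only if C = {(c_0, ..., c_{n−1}) ∈ 𝔽_q^n : ∑_{i=0}^{n−1} c_i·τ^i(P) = 0}; in particular, this code is a skew (α,θ)-cyclic code of dimension n − k. -/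
/-- The `k×k` companion matrix of the monic polynomial with coefficients
`a_0, …, a_{k-1}, 1`: entry `1` in positions `(i, i+1)` for `0 ≤ i ≤ k-2`,
last row `(-a_0, …, -a_{k-1})`, zeros elsewhere. -/
def compMat (k : ℕ) {F : Type*} [Field F] (a : ℕ → F) :
    Matrix (Fin k) (Fin k) F :=
  Matrix.of fun i j => if i.val = k - 1 then -a j.val
    else if j.val = i.val + 1 then 1 else 0

namespace SkewAux

variable {F : Type*} [Field F] (θ : F ≃+* F) {k : ℕ} (a : ℕ → F)

def eVec (k : ℕ) (m : ℕ) : Fin k → F := fun j => if j.val = m then 1 else 0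

def sVec (kk : ℕ) (m : ℕ) : Fin kk → F :=
  (tauMap θ (compMat kk a))^[m] (eVec kk 0)

lemma tau_apply {T : Matrix (Fin k) (Fin k) F} (v : Fin k → F) (j : Fin k) :
    tauMap θ T v j = ∑ i : Fin k, θ (v i) * T i j := by
  simp [tauMap, Matrix.vecMul, dotProduct]

lemma tau_eVec_sum {T : Matrix (Fin k) (Fin k) F} (m : ℕ) (hm : m < k) (j : Fin k) :
    tauMap θ T (eVec k m) j = T ⟨m, hm⟩ j := by
  rw [tau_apply]
  have : ∀ i : Fin k, θ (eVec k m i) * T i j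
      = if i = ⟨m, hm⟩ then T i j else 0 := by
    intro i
    simp only [eVec, apply_ite θ, map_one, map_zero, Fin.ext_iff]
    split_ifs <;> simp
  simp only [this, Finset.sum_ite_eq' Finset.univ, Finset.mem_univ, if_true]

lemma tau_e (m : ℕ) (hm : m + 1 < k) :
    tauMap θ (compMat k a) (eVec k m) = eVec k (m + 1) := by
  funext j
  rw [tau_eVec_sum θ m (by omega) j]
  have hne : m ≠ k - 1 := by omega
  simp only [compMat, Matrix.of_apply, hne, if_false, eVec]

lemma tau_e_last (hk : 1 ≤ k) :
    tauMap θ (compMat k a) (eVec k (k - 1)) = fun j => -a j.val := by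
  funext j
  rw [tau_eVec_sum θ (k - 1) (by omega) j]
  simp [compMat]

lemma sVec_succ (m : ℕ) :
    sVec θ a k (m + 1) = tauMap θ (compMat k a) (sVec θ a k m) := by
  rw [sVec, Function.iterate_succ_apply']; rfl

lemma sVec_eq_e (m : ℕ) (hm : m < k) : sVec θ a k m = eVec k m := by
  induction m with
  | zero => rfl
  | succ m ih =>
    rw [sVec_succ, ih (by omega), tau_e θ a m hm]

lemma factB (hk : 1 ≤ k) (hamonic : a k = 1) :
    ∑ m ∈ Finset.range (k + 1), a m • sVec θ a k m = 0 := by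
  rw [Finset.sum_range_succ, hamonic, one_smul]
  have hsk : sVec θ a k k = fun j => -a j.val := by
    have h1 := sVec_succ θ a (k := k) (k - 1)
    rw [show k - 1 + 1 = k by omega] at h1
    rw [h1, sVec_eq_e θ a (k - 1) (by omega), tau_e_last θ a hk]
  have hsum : ∑ m ∈ Finset.range k, a m • sVec θ a k m = fun j : Fin k => a j.val := by
    funext j
    rw [Finset.sum_apply]
    have : ∀ m ∈ Finset.range k, (a m • sVec θ a k m) j
        = if m = j.val then a j.val else 0 := by
      intro m hm
      rw [sVec_eq_e θ a m (Finset.mem_range.mp hm)]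
      simp only [eVec, Pi.smul_apply, smul_eq_mul]
      by_cases h : (j : ℕ) = m
      · simp [h, eq_comm]
      · simp [h, Ne.symm h, fun hh : m = j.val => h hh.symm]
    rw [Finset.sum_congr rfl this, Finset.sum_ite_eq' (Finset.range k)]
    simp [j.isLt]
  rw [hsum, hsk]
  funext j; simp

lemma theta_iter_one (m : ℕ) : (⇑θ)^[m] (1 : F) = 1 := by
  induction m with
  | zero => rfl
  | succ m ih => rw [Function.iterate_succ_apply', ih, map_one]

lemma theta_iter_zero (m : ℕ) : (⇑θ)^[m] (0 : F) = 0 := by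
  induction m with
  | zero => rfl
  | succ m ih => rw [Function.iterate_succ_apply', ih, map_zero]

section Semilinear
variable {T : Matrix (Fin k) (Fin k) F}

lemma tau_add (v w : Fin k → F) :
    tauMap θ T (v + w) = tauMap θ T v + tauMap θ T w := by
  funext j
  simp [tau_apply, add_mul, Finset.sum_add_distrib]

lemma tau_smul (x : F) (v : Fin k → F) :
    tauMap θ T (x • v) = θ x • tauMap θ T v := by
  funext j
  simp [tau_apply, Finset.mul_sum, mul_assoc]

lemma tau_zero : tauMap θ T (0 : Fin k → F) = 0 := by
  funext j; simp [tau_apply]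

lemma tau_iter_zero (m : ℕ) : (tauMap θ T)^[m] (0 : Fin k → F) = 0 := by
  induction m with
  | zero => rfl
  | succ m ih => rw [Function.iterate_succ_apply', ih, tau_zero]

lemma tau_iter_add (m : ℕ) (v w : Fin k → F) :
    (tauMap θ T)^[m] (v + w) = (tauMap θ T)^[m] v + (tauMap θ T)^[m] w := by
  induction m with
  | zero => rfl
  | succ m ih => simp only [Function.iterate_succ_apply', ih, tau_add]

lemma tau_iter_smul (m : ℕ) (x : F) (v : Fin k → F) :
    (tauMap θ T)^[m] (x • v) = (⇑θ)^[m] x • (tauMap θ T)^[m] v := by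
  induction m with
  | zero => rfl
  | succ m ih => simp only [Function.iterate_succ_apply', ih, tau_smul]

lemma tau_iter_sum {ι : Type*} (S : Finset ι) (m : ℕ) (f : ι → Fin k → F) :
    (tauMap θ T)^[m] (∑ i ∈ S, f i) = ∑ i ∈ S, (tauMap θ T)^[m] (f i) := by
  classical
  induction S using Finset.induction with
  | empty => simp [tau_iter_zero]
  | insert _ _ h ih => simp [Finset.sum_insert h, tau_iter_add, ih]

end Semilinear

lemma sVec_iter (i m : ℕ) :
    (tauMap θ (compMat k a))^[i] (sVec θ a k m) = sVec θ a k (m + i) := by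
  rw [sVec, sVec, add_comm, Function.iterate_add_apply]

lemma factB' (hk : 1 ≤ k) (hamonic : a k = 1) (i : ℕ) :
    ∑ m ∈ Finset.range (k + 1), (⇑θ)^[i] (a m) • sVec θ a k (m + i) = 0 := by
  have h0 := factB θ a hk hamonic
  have := congrArg ((tauMap θ (compMat k a))^[i]) h0
  rw [tau_iter_sum, tau_iter_zero] at this
  rw [← this]
  refine Finset.sum_congr rfl fun m _ => ?_
  rw [tau_iter_smul, sVec_iter]

lemma keyLemma {n : ℕ} (hkn : k ≤ n) (hk : 1 ≤ k) (hamonic : a k = 1)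
    (hatop : ∀ i, k < i → a i = 0) (i : ℕ) (hi : i ≤ n - k) :
    ∑ j ∈ Finset.range (n + 1),
      (if i ≤ j then (⇑θ)^[i] (a (j - i)) else 0) • sVec θ a k j = 0 := by
  have hsub : (Finset.range (k + 1)).image (· + i) ⊆ Finset.range (n + 1) := by
    intro x hx
    simp only [Finset.mem_image, Finset.mem_range] at hx ⊢
    omega
  rw [← Finset.sum_subset hsub]
  · rw [Finset.sum_image (by intro x _ y _ h; dsimp only at h; omega)]
    rw [← factB' θ a hk hamonic i]
    refine Finset.sum_congr rfl fun m _ => ?_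
    rw [if_pos (by omega), Nat.add_sub_cancel]
  · intro j hj hjn
    simp only [Finset.mem_image, Finset.mem_range] at hjn
    by_cases hij : i ≤ j
    · have : a (j - i) = 0 := by
        apply hatop
        by_contra hc
        exact hjn ⟨j - i, by omega, by omega⟩
      rw [if_pos hij, this, theta_iter_zero, zero_smul]
    · rw [if_neg hij, zero_smul]

lemma factC {n : ℕ} (hkn : k ≤ n) (hn : 1 ≤ n) (hk : 1 ≤ k) (hamonic : a k = 1)
    (hatop : ∀ i, k < i → a i = 0) (α : F) (t : ℕ → F)
    (ht0 : ∀ i, n - k < i → t i = 0)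
    (ht : ∀ j ≤ n, ∑ i ∈ Finset.range (j + 1), t i * (⇑θ)^[i] (a (j - i)) =
      if j = n then 1 else if j = 0 then -α else 0) :
    sVec θ a k n = α • sVec θ a k 0 := by
  have hS1 : ∑ j ∈ Finset.range (n + 1),
      (∑ i ∈ Finset.range (j + 1), t i * (⇑θ)^[i] (a (j - i))) • sVec θ a k j
      = sVec θ a k n + (-α) • sVec θ a k 0 := by
    have : ∀ j ∈ Finset.range (n + 1),
        (∑ i ∈ Finset.range (j + 1), t i * (⇑θ)^[i] (a (j - i))) • sVec θ a k j
        = (if j = n then (1:F) else if j = 0 then -α else 0) • sVec θ a k j := by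
      intro j hj
      rw [ht j (by simp at hj; omega)]
    rw [Finset.sum_congr rfl this, Finset.sum_range_succ, if_pos rfl, one_smul]
    have h2 : ∀ j ∈ Finset.range n,
        (if j = n then (1:F) else if j = 0 then -α else 0) • sVec θ a k j
        = if j = 0 then (-α) • sVec θ a k j else 0 := by
      intro j hj
      simp only [Finset.mem_range] at hj
      rw [if_neg (by omega)]
      split_ifs <;> simp
    rw [Finset.sum_congr rfl h2, Finset.sum_ite_eq' (Finset.range n),
      if_pos (Finset.mem_range.mpr hn), add_comm]
  have hS2 : ∑ j ∈ Finset.range (n + 1),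
      (∑ i ∈ Finset.range (j + 1), t i * (⇑θ)^[i] (a (j - i))) • sVec θ a k j
      = 0 := by
    have hstep : ∀ j ∈ Finset.range (n + 1),
        (∑ i ∈ Finset.range (j + 1), t i * (⇑θ)^[i] (a (j - i))) • sVec θ a k j
        = ∑ i ∈ Finset.range (n + 1),
            t i • ((if i ≤ j then (⇑θ)^[i] (a (j - i)) else 0) • sVec θ a k j) := by
      intro j hj
      simp only [Finset.mem_range] at hj
      rw [Finset.sum_smul]
      rw [← Finset.sum_subset (Finset.range_subset_range.mpr (by omega : j + 1 ≤ n + 1))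
        (fun x _ hx => by
          rw [if_neg (by simp at hx; omega), zero_smul, smul_zero])]
      refine Finset.sum_congr rfl fun i hi => ?_
      rw [if_pos (by simp at hi; omega), smul_smul]
    rw [Finset.sum_congr rfl hstep, Finset.sum_comm]
    refine Finset.sum_eq_zero fun i _ => ?_
    rw [← Finset.smul_sum]
    by_cases hi : i ≤ n - k
    · rw [keyLemma θ a hkn hk hamonic hatop i hi, smul_zero]
    · rw [ht0 i (by omega), zero_smul]
  rw [hS2] at hS1
  have := hS1.symm
  rw [neg_smul, ← eq_neg_iff_add_eq_zero] at this
  simp [this]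


lemma tau_sum {ι : Type*} {T : Matrix (Fin k) (Fin k) F} (S : Finset ι) (f : ι → Fin k → F) :
    tauMap θ T (∑ i ∈ S, f i) = ∑ i ∈ S, tauMap θ T (f i) := by
  have := tau_iter_sum θ (T := T) S 1 f
  simpa using this

/-- the linear map `c ↦ ∑ cᵢ • τ^i(P)` -/
def psiMap (n k : ℕ) {F : Type*} [Field F] (θ : F ≃+* F) (a : ℕ → F) :
    (Fin n → F) →ₗ[F] (Fin k → F) where
  toFun c := ∑ i : Fin n, c i • sVec θ a k i.val
  map_add' c d := by simp [add_smul, Finset.sum_add_distrib]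
  map_smul' x c := by simp [Finset.smul_sum, mul_smul]

lemma genVec_mem_ker {n : ℕ} (hk : 1 ≤ k) (hkn : k + 1 ≤ n) (hamonic : a k = 1)
    (hatop : ∀ i, k < i → a i = 0) (j : ℕ) (hj : j < n - k) :
    psiMap n k θ a (genVec n θ a j) = 0 := by
  have hrw : psiMap n k θ a (genVec n θ a j)
      = ∑ i ∈ Finset.range n,
        (if j ≤ i then (⇑θ)^[j] (a (i - j)) else 0) • sVec θ a k i := by
    rw [show psiMap n k θ a (genVec n θ a j)
      = ∑ i : Fin n, (fun m => (if j ≤ m then (⇑θ)^[j] (a (m - j)) else 0) • sVec θ a k m) i.val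
      from rfl]
    exact Fin.sum_univ_eq_sum_range (fun m => (if j ≤ m then (⇑θ)^[j] (a (m - j)) else 0) • sVec θ a k m) n
  have hkey := keyLemma θ a (n := n) (by omega) hk hamonic hatop j (by omega)
  rw [Finset.sum_range_succ] at hkey
  rw [hatop (n - j) (by omega), theta_iter_zero, if_pos (by omega : j ≤ n),
    zero_smul, add_zero] at hkey
  rw [hrw, hkey]

lemma psi_surj {n : ℕ} (hkn : k ≤ n) :
    Function.Surjective (psiMap n k θ a) := by
  intro y
  refine ⟨fun i => if h : i.val < k then y ⟨i.val, h⟩ else 0, ?_⟩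
  have : psiMap n k θ a (fun i => if h : i.val < k then y ⟨i.val, h⟩ else 0)
      = ∑ i : Fin n, (if h : i.val < k then y ⟨i.val, h⟩ else 0) • sVec θ a k i.val := rfl
  rw [this]
  funext j
  have hjn : (j : ℕ) < n := lt_of_lt_of_le j.isLt hkn
  rw [Finset.sum_apply]
  have hterm : ∀ i : Fin n,
      ((if h : i.val < k then y ⟨i.val, h⟩ else 0) • sVec θ a k i.val) j
      = if i = (⟨j.val, hjn⟩ : Fin n) then y j else 0 := by
    intro i
    by_cases h : i.val < k
    · rw [dif_pos h, sVec_eq_e θ a i.val h]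
      simp only [eVec, Pi.smul_apply, smul_eq_mul, Fin.ext_iff]
      by_cases h2 : (i : ℕ) = (j : ℕ)
      · simp [h2, Fin.ext_iff]
      · rw [if_neg (fun hh => h2 hh.symm), if_neg h2, mul_zero]
    · rw [dif_neg h, zero_smul]
      rw [if_neg (by simp only [Fin.ext_iff]; omega)]
      rfl
  rw [Finset.sum_congr rfl (fun i _ => hterm i),
    Finset.sum_ite_eq' Finset.univ, if_pos (Finset.mem_univ _)]

lemma skew_ker {n : ℕ} [NeZero n] (hn2 : 2 ≤ n) (α : F)
    (hsn : sVec θ a k n = α • sVec θ a k 0) (c : Fin n → F)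
    (hc : psiMap n k θ a c = 0) :
    psiMap n k θ a (skewShift n θ α c) = 0 := by
  have h1n : (1 : Fin n).val = 1 := by
    rw [Fin.val_one']; exact Nat.mod_eq_of_lt (by omega)
  have htau : ∑ i : Fin n, θ (c i) • sVec θ a k (i.val + 1) = 0 := by
    have h2 := congrArg (tauMap θ (compMat k a)) hc
    rw [show psiMap n k θ a c = ∑ i : Fin n, c i • sVec θ a k i.val from rfl,
      tau_sum, tau_zero] at h2
    rw [← h2]
    refine Finset.sum_congr rfl fun i _ => ?_
    rw [tau_smul, ← sVec_succ]
  have hgoal : psiMap n k θ a (skewShift n θ α c)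
      = ∑ i : Fin n, ((if i = 0 then α else 1) * θ (c (i - 1))) • sVec θ a k i.val := rfl
  rw [hgoal,
    ← Equiv.sum_comp (Equiv.addRight (1 : Fin n))
      (fun i : Fin n => ((if i = 0 then α else 1) * θ (c (i - 1))) • sVec θ a k i.val),
    ← htau]
  refine Finset.sum_congr rfl fun i _ => ?_
  have heq : Equiv.addRight (1 : Fin n) i = i + 1 := rfl
  rw [heq, add_sub_cancel_right]
  by_cases hi : (i : ℕ) = n - 1
  · have h0 : i + 1 = 0 := by
      rw [Fin.ext_iff, Fin.val_add, h1n, Fin.val_zero, hi,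
        show n - 1 + 1 = n by omega, Nat.mod_self]
    rw [h0, if_pos rfl, Fin.val_zero, hi, show n - 1 + 1 = n by omega, hsn,
      mul_comm, mul_smul]
  · have hval : (i + 1 : Fin n).val = i.val + 1 := by
      rw [Fin.val_add, h1n]
      exact Nat.mod_eq_of_lt (by have := i.isLt; omega)
    have h0 : ¬ (i + 1 = 0) := by
      rw [Fin.ext_iff, hval]; simp
    rw [if_neg h0, one_mul, hval]

lemma genVec_li {n : ℕ} (hk : 1 ≤ k) (hkn : k + 1 ≤ n) (hamonic : a k = 1)
    (hatop : ∀ i, k < i → a i = 0) :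
    LinearIndependent F (fun j : Fin (n - k) => genVec n θ a j.val) := by
  rw [Fintype.linearIndependent_iff]
  intro g hg
  have key : ∀ d : ℕ, ∀ j : Fin (n - k), (n - k) - j.val ≤ d → g j = 0 := by
    intro d
    induction d with
    | zero => intro j hj; exact absurd hj (by have := j.isLt; omega)
    | succ d ih =>
      intro j hj
      have hidx : k + j.val < n := by have := j.isLt; omega
      have hgj := congrFun hg (⟨k + j.val, hidx⟩ : Fin n)
      rw [Finset.sum_apply] at hgj
      have hterm : ∀ i : Fin (n - k),
          (g i • genVec n θ a i.val) (⟨k + j.val, hidx⟩ : Fin n)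
          = if i = j then g j else 0 := by
        intro i
        simp only [genVec, Pi.smul_apply, smul_eq_mul]
        rcases lt_trichotomy (i : ℕ) (j : ℕ) with h | h | h
        · rw [if_neg (Fin.ne_of_val_ne (by omega)), if_pos (by omega : i.val ≤ k + j.val),
            hatop (k + j.val - i.val) (by omega), theta_iter_zero, mul_zero]
        · have : i = j := Fin.ext h
          subst this
          rw [if_pos rfl, if_pos (by omega : i.val ≤ k + i.val),
            show k + i.val - i.val = k by omega, hamonic, theta_iter_one, mul_one]
        · rw [if_neg (Fin.ne_of_val_ne (by omega)), ih i (by omega), zero_mul]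
      rw [Finset.sum_congr rfl (fun i _ => hterm i),
        Finset.sum_ite_eq' Finset.univ, if_pos (Finset.mem_univ _)] at hgj
      exact hgj
  intro j
  exact key (n - k) j (by omega)

end SkewAux

open SkewAux in
/-- with `g(x) = ∑_{i=0}^k a_i x^i` monic, a right divisor of
`x^n - α` in `𝔽_q[x;θ]`, `τ = Θ ∘ T_g` and `P = (1,0,…,0)`, a linear code
`C ⊆ 𝔽_q^n` equals the code generated by `g(x)` iff
`C = {c : ∑ c_i·τ^i(P) = 0}`; in particular, this code is a skew
`(α,θ)`-cyclic code of dimension `n - k`. -/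
theorem stmt_7 {n k : ℕ} [NeZero n] (hk : 1 ≤ k) (hkn : k ≤ n - 1)
    {F : Type*} [Field F] [Fintype F]
    (θ : F ≃+* F) (α : F) (hα : α ≠ 0)
    (a : ℕ → F) (hatop : ∀ i, k < i → a i = 0) (hamonic : a k = 1)
    (hdvd : ∃ t : ℕ → F, (∀ i, n - k < i → t i = 0) ∧
      ∀ j ≤ n, ∑ i ∈ Finset.range (j + 1), t i * (⇑θ)^[i] (a (j - i)) =
        if j = n then 1 else if j = 0 then -α else 0) :
    (∀ C : Submodule F (Fin n → F),
      (C : Set (Fin n → F)) =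
        ((Submodule.span F {v : Fin n → F | ∃ j < n - k, v = genVec n θ a j} :
          Submodule F (Fin n → F)) : Set (Fin n → F)) ↔
      (C : Set (Fin n → F)) =
        {c : Fin n → F | ∑ i : Fin n,
          c i • (tauMap θ (compMat k a))^[(i : ℕ)]
            (fun j : Fin k => if j.val = 0 then 1 else 0) = 0}) ∧
    (∀ c ∈ (Submodule.span F {v : Fin n → F | ∃ j < n - k, v = genVec n θ a j} :
        Submodule F (Fin n → F)),
      skewShift n θ α c ∈
        (Submodule.span F {v : Fin n → F | ∃ j < n - k, v = genVec n θ a j} :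
          Submodule F (Fin n → F))) ∧
    Module.finrank F
      (Submodule.span F {v : Fin n → F | ∃ j < n - k, v = genVec n θ a j} :
        Submodule F (Fin n → F)) = n - k := by
  obtain ⟨t, ht0, ht⟩ := hdvd
  have hn0 := NeZero.ne n
  have hn2 : 2 ≤ n := by omega
  have hkn1 : k + 1 ≤ n := by omega
  set G : Submodule F (Fin n → F) :=
    Submodule.span F {v : Fin n → F | ∃ j < n - k, v = genVec n θ a j} with hGdef
  have hset : {v : Fin n → F | ∃ j < n - k, v = genVec n θ a j}
      = Set.range (fun j : Fin (n - k) => genVec n θ a j.val) := by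
    ext v
    constructor
    · rintro ⟨j, hj, rfl⟩; exact ⟨⟨j, hj⟩, rfl⟩
    · rintro ⟨j, rfl⟩; exact ⟨j.val, j.isLt, rfl⟩
  have hfrG : Module.finrank F G = n - k := by
    rw [hGdef, hset, finrank_span_eq_card (genVec_li θ a hk hkn1 hamonic hatop)]
    simp
  have hGle : G ≤ LinearMap.ker (psiMap n k θ a) := by
    rw [hGdef, Submodule.span_le]
    rintro v ⟨j, hj, rfl⟩
    exact LinearMap.mem_ker.mpr (genVec_mem_ker θ a hk hkn1 hamonic hatop j hj)
  have hfrker : Module.finrank F (LinearMap.ker (psiMap n k θ a)) = n - k := by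
    have h1 := LinearMap.finrank_range_add_finrank_ker (psiMap n k θ a)
    rw [LinearMap.range_eq_top.mpr (psi_surj θ a (by omega)), finrank_top,
      Module.finrank_fin_fun, Module.finrank_fin_fun] at h1
    omega
  have hG : G = LinearMap.ker (psiMap n k θ a) :=
    Submodule.eq_of_le_of_finrank_le hGle (by rw [hfrker, hfrG])
  have hsetker : {c : Fin n → F | ∑ i : Fin n,
      c i • (tauMap θ (compMat k a))^[(i : ℕ)]
        (fun j : Fin k => if j.val = 0 then 1 else 0) = 0}
      = (LinearMap.ker (psiMap n k θ a) : Set (Fin n → F)) := by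
    ext c
    rw [Set.mem_setOf_eq, SetLike.mem_coe, LinearMap.mem_ker]
    exact Iff.rfl
  refine ⟨fun C => ?_, fun c hc => ?_, hfrG⟩
  · rw [hsetker, ← hG]
  · rw [hG] at hc ⊢
    rw [LinearMap.mem_ker] at hc ⊢
    exact skew_ker θ a hn2 α
      (factC θ a (by omega) (by omega) hk hamonic hatop α t ht0 ht) c hc
end

section
/- Let p be a prime, t ≥ 2, 1 ≤ s ≤ t−1, q = p^t, and let θ be the automorphism of 𝔽_q given by θ(a) = a^{p^s}. Let α ∈ 𝔽_q*, let n > k ≥ 1, and let g_0, ..., g_k ∈ 𝔽_q with g_k = 1 be such that g(x) = ∑_{i=0}^{k} g_i x^i is a right divisor of x^n − α in 𝔽_q[x;θ]. Then the associated [p^s]-polynomial g^{[]_s}(X) = ∑_{i=0}^{k} g_i·X^{[i]_s} divides X^{[n]_s} − α in the commutative polynomial ring 𝔽_q[X]. -/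
/-- `br p s i = [i]_s = 1 + p^s + p^{2s} + ⋯ + p^{(i-1)s} = ((p^s)^i - 1)/(p^s - 1)`. -/
def br (p s i : ℕ) : ℕ := ∑ j ∈ Finset.range i, (p ^ s) ^ j

lemma br_add (p s i j : ℕ) : br p s (i + j) = br p s i + (p ^ s) ^ i * br p s j := by
  unfold br
  rw [Finset.sum_range_add, Finset.mul_sum]
  congr 1
  exact Finset.sum_congr rfl fun x _ => pow_add _ _ _

lemma conv_sum {M : Type*} [AddCommMonoid M] (n : ℕ) (f : ℕ → ℕ → M)
    (h : ∀ i j, n < i + j → f i j = 0) :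
    ∑ i ∈ Finset.range (n + 1), ∑ j ∈ Finset.range (n + 1), f i j
      = ∑ m ∈ Finset.range (n + 1), ∑ i ∈ Finset.range (m + 1), f i (m - i) := by
  have h1 : ∀ m, ∑ i ∈ Finset.range (m + 1), f i (m - i)
      = ∑ q ∈ Finset.HasAntidiagonal.antidiagonal m, f q.1 q.2 := fun m =>
    (Finset.Nat.sum_antidiagonal_eq_sum_range_succ_mk (fun q => f q.1 q.2) m).symm
  simp_rw [h1]
  rw [← Finset.sum_product']
  rw [← Finset.sum_biUnion (by
    intro a _ b _ hab
    simp only [Finset.disjoint_left]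
    intro q hqa hqb
    rw [Finset.HasAntidiagonal.mem_antidiagonal] at hqa hqb
    exact hab (hqa.symm.trans hqb))]
  refine (Finset.sum_subset ?_ ?_).symm
  · intro q hq
    simp only [Finset.mem_biUnion, Finset.HasAntidiagonal.mem_antidiagonal, Finset.mem_range] at hq
    obtain ⟨m, hm, hq⟩ := hq
    simp only [Finset.mem_product, Finset.mem_range]
    omega
  · intro q hq hnq
    refine h q.1 q.2 ?_
    by_contra hc
    exact hnq (Finset.mem_biUnion.mpr ⟨q.1 + q.2, Finset.mem_range.mpr (by omega),
      Finset.HasAntidiagonal.mem_antidiagonal.mpr rfl⟩)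

open Polynomial

/-- Leroy: if `g(x) = ∑_{i=0}^k g_i x^i` (monic) is a right
divisor of `x^n - α` in `𝔽_q[x;θ]` with `θ(a) = a^{p^s}`, then the associated
`[p^s]`-polynomial `g^{[]ₛ}(X) = ∑ g_i X^{[i]_s}` divides `X^{[n]_s} - α`
in the commutative polynomial ring `𝔽_q[X]`. -/
theorem stmt_9 {p t s : ℕ} (hp : p.Prime) (ht : 2 ≤ t) (hs1 : 1 ≤ s)
    (hs2 : s ≤ t - 1)
    {F : Type*} [Field F] [Fintype F] (hF : Fintype.card F = p ^ t)
    (θ : F ≃+* F) (hθ : ∀ a : F, θ a = a ^ p ^ s)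
    (α : F) (hα : α ≠ 0) (n k : ℕ) (hk : 1 ≤ k) (hkn : k < n)
    (g : ℕ → F) (hgmonic : g k = 1) (hgtop : ∀ i, k < i → g i = 0)
    (hdvd : ∃ t' : ℕ → F, (∀ i, n - k < i → t' i = 0) ∧
      ∀ j ≤ n, ∑ i ∈ Finset.range (j + 1), t' i * (⇑θ)^[i] (g (j - i)) =
        if j = n then 1 else if j = 0 then -α else 0) :
    (∑ i ∈ Finset.range (k + 1), Polynomial.C (g i) * Polynomial.X ^ br p s i) ∣
      (Polynomial.X ^ br p s n - Polynomial.C α : Polynomial F) := by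
  classical
  obtain ⟨t', ht0, hconv⟩ := hdvd
  -- characteristic
  haveI hpF : CharP F p := by
    haveI : CharP F (ringChar F) := ringChar.charP F
    obtain ⟨m, hr, hcard⟩ := FiniteField.card F (ringChar F)
    have hdp : p ∣ (ringChar F) ^ (m : ℕ) := by
      rw [← hcard, hF]
      exact dvd_pow_self p (by omega)
    have : p = ringChar F := (Nat.prime_dvd_prime_iff_eq hp hr).mp (hp.dvd_of_dvd_pow hdp)
    exact this ▸ ringChar.charP F
  haveI := Fact.mk hp
  -- iterates of θ
  have hθi : ∀ (i : ℕ) (a : F), (⇑θ)^[i] a = a ^ p ^ (s * i) := by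
    intro i
    induction i with
    | zero => intro a; simp
    | succ i ih =>
      intro a
      rw [Function.iterate_succ_apply', ih, hθ, ← pow_mul, ← pow_add]
      congr 1
  set G : Polynomial F := ∑ i ∈ Finset.range (k + 1), C (g i) * X ^ br p s i with hG
  -- Frobenius powers of G
  have hGpow : ∀ i : ℕ, G ^ p ^ (s * i) =
      ∑ j ∈ Finset.range (k + 1), C (g j ^ p ^ (s * i)) * X ^ (br p s j * p ^ (s * i)) := by
    intro i
    calc G ^ p ^ (s * i) = iterateFrobenius (Polynomial F) p (s * i) G := by
          rw [iterateFrobenius_def]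
      _ = ∑ j ∈ Finset.range (k + 1),
            iterateFrobenius (Polynomial F) p (s * i) (C (g j) * X ^ br p s j) := by
          rw [hG, map_sum]
      _ = _ := by
          refine Finset.sum_congr rfl fun j _ => ?_
          rw [map_mul, iterateFrobenius_def, iterateFrobenius_def, ← map_pow, ← pow_mul]
  set f : ℕ → ℕ → Polynomial F :=
    fun i j => C (t' i * g j ^ p ^ (s * i)) * X ^ br p s (i + j) with hf
  have key : (∑ i ∈ Finset.range (n - k + 1), C (t' i) * G ^ p ^ (s * i) * X ^ br p s i)
      = X ^ br p s n - C α := by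
    have step1 : ∀ i, C (t' i) * G ^ p ^ (s * i) * X ^ br p s i
        = ∑ j ∈ Finset.range (k + 1), f i j := by
      intro i
      rw [hGpow i, Finset.mul_sum, Finset.sum_mul]
      refine Finset.sum_congr rfl fun j _ => ?_
      rw [hf]
      simp only []
      rw [C_mul, br_add, pow_add, ← pow_mul]
      ring
    rw [Finset.sum_congr rfl fun i _ => step1 i]
    have inner : ∀ i, ∑ j ∈ Finset.range (k + 1), f i j
        = ∑ j ∈ Finset.range (n + 1), f i j := by
      intro i
      refine Finset.sum_subset (Finset.range_subset_range.mpr (by omega)) fun j _ hj => ?_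
      have hjk : k < j := by
        simp only [Finset.mem_range] at hj; omega
      rw [hf]
      simp only [hgtop j hjk, zero_pow (pow_ne_zero _ hp.ne_zero), mul_zero, map_zero, zero_mul]
    have outer : ∑ i ∈ Finset.range (n - k + 1), ∑ j ∈ Finset.range (n + 1), f i j
        = ∑ i ∈ Finset.range (n + 1), ∑ j ∈ Finset.range (n + 1), f i j := by
      refine Finset.sum_subset (Finset.range_subset_range.mpr (by omega)) fun i _ hi => ?_
      have hik : n - k < i := by
        simp only [Finset.mem_range] at hi; omega
      refine Finset.sum_eq_zero fun j _ => ?_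
      rw [hf]
      simp only [ht0 i hik, zero_mul, map_zero]
    have hvanish : ∀ i j, n < i + j → f i j = 0 := by
      intro i j hij
      rw [hf]
      by_cases hi : n - k < i
      · simp only [ht0 i hi, zero_mul, map_zero, zero_mul]
      · have hjk : k < j := by omega
        simp only [hgtop j hjk, zero_pow (pow_ne_zero _ hp.ne_zero), mul_zero, map_zero, zero_mul]
    rw [Finset.sum_congr rfl fun i _ => inner i, outer, conv_sum n f hvanish]
    have inner2 : ∀ m ∈ Finset.range (n + 1), ∑ i ∈ Finset.range (m + 1), f i (m - i)
        = C (if m = n then 1 else if m = 0 then -α else 0) * X ^ br p s m := by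
      intro m hm
      have hm' : m ≤ n := by simp only [Finset.mem_range] at hm; omega
      rw [← hconv m hm']
      have : ∀ i ∈ Finset.range (m + 1), f i (m - i)
          = C (t' i * (⇑θ)^[i] (g (m - i))) * X ^ br p s m := by
        intro i hi
        have him : i + (m - i) = m := by
          simp only [Finset.mem_range] at hi; omega
        rw [hf]
        simp only []
        rw [hθi i, him]
      rw [Finset.sum_congr rfl this, ← Finset.sum_mul, ← map_sum]
    rw [Finset.sum_congr rfl inner2]
    have hn0 : n ≠ 0 := by omega
    have split : ∀ m ∈ Finset.range (n + 1),
        C (if m = n then 1 else if m = 0 then -α else 0) * X ^ br p s m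
          = (if m = n then X ^ br p s n else 0) + (if m = 0 then -C α else 0) := by
      intro m _
      by_cases h1 : m = n
      · subst h1; simp [hn0]
      · by_cases h2 : m = 0
        · subst h2; simp [hn0, Ne.symm hn0, br]
        · simp [h1, h2]
    rw [Finset.sum_congr rfl split, Finset.sum_add_distrib,
      Finset.sum_ite_eq' (Finset.range (n + 1)) n, Finset.sum_ite_eq' (Finset.range (n + 1)) 0]
    simp only [Finset.mem_range, Nat.lt_succ_iff, le_refl, if_true, Nat.zero_le, if_pos]
    ring
  rw [← key]
  exact Finset.dvd_sum fun i _ =>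
    ((dvd_pow_self G (pow_ne_zero _ hp.ne_zero)).mul_left _).mul_right _
end
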